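/- Let W be a 3-dimensional vector space over a square-dense ordered field F, and let χ be a non-degenerate, non-symmetric bilinear form on W such that χ(u, u) > 0 for some u ∈ W. Then there exist vectors v₁, v₂ ∈ W with χ(v₁, v₁) > 0, χ(v₂, v₂) > 0, and χ(v₁, v₂) = 0. -/

import Mathlib

set_option maxHeartbeats 1000000

section Aux16

variable {F W : Type*} [Field F] [LinearOrder F] [IsStrictOrderedRing F] [AddCommGroup W] [Module F W]

/-- Key construction: if `w` is orthogonal to `v₁` for the symmetric part of `χ`,
`χ v₁ w ≠ 0`, and a quantitative inequality holds, then `v₂ := v₁ - (q/c) • w`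
is positive and `χ`-orthogonal to `v₁`. -/
private lemma keycons16 (χ : W →ₗ[F] W →ₗ[F] F) (v₁ w : W)
    (h1 : 0 < χ v₁ v₁) (h2 : χ w v₁ = - χ v₁ w) (h3 : χ v₁ w ≠ 0)
    (h4 : χ v₁ v₁ * (-(χ w w)) < (χ v₁ w)^2) :
    ∃ v₂ : W, 0 < χ v₂ v₂ ∧ χ v₁ v₂ = 0 := by
  set q := χ v₁ v₁ with hq
  set c := χ v₁ w with hc
  refine ⟨v₁ + (-q/c) • w, ?_, ?_⟩
  · have hval : χ (v₁ + (-q/c) • w) (v₁ + (-q/c) • w)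
        = q * (c^2 + q * χ w w) / c^2 := by
      simp only [map_add, map_smul, LinearMap.add_apply, LinearMap.smul_apply, smul_eq_mul]
      rw [h2, ← hq, ← hc]
      field_simp
      ring
    rw [hval]
    exact div_pos (mul_pos h1 (by nlinarith)) (by positivity)
  · have hval : χ v₁ (v₁ + (-q/c) • w) = q + (-q/c) * c := by
      simp only [map_add, map_smul, smul_eq_mul, ← hq, ← hc]
    rw [hval]
    field_simp
    ring

private lemma simple16 (χ : W →ₗ[F] W →ₗ[F] F) (f w : W)
    (hD : 0 < χ f f) (hw : χ w f = - χ f w)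
    (h4 : χ f f * (-(χ w w)) < (χ f w)^2) (hc : χ f w ≠ 0) :
    ∃ v₁ v₂ : W, 0 < χ v₁ v₁ ∧ 0 < χ v₂ v₂ ∧ χ v₁ v₂ = 0 := by
  obtain ⟨v₂, ha, hb⟩ := keycons16 χ f w hD hw hc h4
  exact ⟨f, v₂, hD, ha, hb⟩

private lemma mixed16 (χ : W →ₗ[F] W →ₗ[F] F) (f g h : W) (x : F)
    (hfg : χ g f = - χ f g) (hfh : χ h f = - χ f h) (hgh : χ h g = - χ g h)
    (hq : 0 < x^2 * χ f f + χ g g)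
    (h4 : (x^2 * χ f f + χ g g) * (-(χ h h)) < (x * χ f h + χ g h)^2)
    (hc : x * χ f h + χ g h ≠ 0) :
    ∃ v₁ v₂ : W, 0 < χ v₁ v₁ ∧ 0 < χ v₂ v₂ ∧ χ v₁ v₂ = 0 := by
  have e1 : χ (x•f + g) (x•f + g) = x^2 * χ f f + χ g g := by
    simp only [map_add, map_smul, LinearMap.add_apply, LinearMap.smul_apply, smul_eq_mul]
    linear_combination x * hfg
  have e3 : χ (x•f + g) h = x * χ f h + χ g h := by
    simp only [map_add, map_smul, LinearMap.add_apply, LinearMap.smul_apply, smul_eq_mul]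
  have e2 : χ h (x•f + g) = -(x * χ f h + χ g h) := by
    simp only [map_add, map_smul, LinearMap.add_apply, LinearMap.smul_apply, smul_eq_mul]
    linear_combination x * hfh + hgh
  obtain ⟨v₂, ha, hb⟩ := keycons16 χ (x•f + g) h (by rw [e1]; exact hq)
    (by rw [e2, e3]) (by rw [e3]; exact hc) (by rw [e1, e3]; exact h4)
  exact ⟨x•f + g, v₂, by rw [e1]; exact hq, ha, hb⟩

private lemma getx16 (hsd : ∀ a b : F, 0 < a → a < b → ∃ c : F, a < c ^ 2 ∧ c ^ 2 < b)
    (D E ε : F) (hD : 0 < D) (hE : E < 0) (hε : 0 < ε) :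
    ∃ x : F, x ≠ 0 ∧ 0 < x^2 * D + E ∧ x^2 * D + E < ε := by
  have hED : 0 < -E / D := div_pos (by linarith) hD
  obtain ⟨c, hc1, hc2⟩ := hsd (-E/D) ((ε - E)/D) hED
    (by rw [div_lt_div_iff₀ hD hD]; nlinarith)
  have h1 : -E < c^2 * D := by
    rw [div_lt_iff₀ hD] at hc1; linarith
  have h2 : c^2 * D < ε - E := by
    rw [lt_div_iff₀ hD] at hc2; linarith
  refine ⟨c, ?_, by linarith, by linarith⟩
  intro h0
  rw [h0] at hc1
  norm_num at hc1
  linarith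

private lemma symmall16 (χ : W →ₗ[F] W →ₗ[F] F) (b : Module.Basis (Fin 3) F W) (i j k : Fin 3)
    (hcov : ∀ p : Fin 3, p = i ∨ p = j ∨ p = k)
    (horth : ∀ p q : Fin 3, p ≠ q → χ (b p) (b q) + χ (b q) (b p) = 0)
    (hij : i ≠ j) (hik : i ≠ k) (hjk : j ≠ k)
    (h1 : χ (b i) (b j) = 0) (h2 : χ (b i) (b k) = 0) (h3 : χ (b j) (b k) = 0) :
    ∀ u v : W, χ u v = χ v u := by
  have hji : χ (b j) (b i) = 0 := by linarith [horth i j hij]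
  have hki : χ (b k) (b i) = 0 := by linarith [horth i k hik]
  have hkj : χ (b k) (b j) = 0 := by linarith [horth j k hjk]
  have hflip : χ = χ.flip := by
    apply b.ext
    intro p
    apply b.ext
    intro q
    rw [LinearMap.flip_apply]
    rcases hcov p with rfl | rfl | rfl <;> rcases hcov q with rfl | rfl | rfl <;>
      simp [h1, h2, h3, hji, hki, hkj]
  intro u v
  nth_rewrite 1 [hflip]
  rfl

/-- The in-plane construction for the Lorentz-plane case `a₁² > D₁·(−D₂)`. -/
private lemma planeB2_16 (hsd : ∀ a b : F, 0 < a → a < b → ∃ c : F, a < c ^ 2 ∧ c ^ 2 < b)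
    (χ : W →ₗ[F] W →ₗ[F] F) (f g : W)
    (hD1 : 0 < χ f f) (hD2 : χ g g < 0) (hfg : χ g f = - χ f g)
    (hB2a : χ f f * (-(χ g g)) < (χ f g)^2) :
    ∃ v₁ v₂ : W, 0 < χ v₁ v₁ ∧ 0 < χ v₂ v₂ ∧ χ v₁ v₂ = 0 := by
  obtain ⟨x, hx0, hq, _⟩ := getx16 hsd (χ f f) (χ g g) 1 hD1 hD2 one_pos
  set D1 := χ f f with hD1d
  set D2 := χ g g with hD2d
  set a1 := χ f g with ha1d
  have hD2ne : D2 ≠ 0 := ne_of_lt hD2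
  have ha1ne : a1 ≠ 0 := by
    intro h0; rw [h0] at hB2a; nlinarith
  set q : F := x^2 * D1 + D2 with hqd
  set t : F := -(D1 * x) / D2 with htd
  have e1 : χ (x•f + g) (x•f + g) = q := by
    simp only [map_add, map_smul, LinearMap.add_apply, LinearMap.smul_apply, smul_eq_mul]
    rw [hfg, hqd]
    ring
  have ec : χ (x•f + g) (f + t•g) = -(a1 * q) / D2 := by
    simp only [map_add, map_smul, LinearMap.add_apply, LinearMap.smul_apply, smul_eq_mul]
    rw [hfg, hqd, htd]
    field_simp
    ring
  have ec2 : χ (f + t•g) (x•f + g) = (a1 * q) / D2 := by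
    simp only [map_add, map_smul, LinearMap.add_apply, LinearMap.smul_apply, smul_eq_mul]
    rw [hfg, hqd, htd]
    field_simp
    ring
  have eww : χ (f + t•g) (f + t•g) = D1 * q / D2 := by
    simp only [map_add, map_smul, LinearMap.add_apply, LinearMap.smul_apply, smul_eq_mul]
    rw [hfg, hqd, htd]
    field_simp
    ring
  have hqpos : 0 < q := hq
  obtain ⟨v₂, ha, hb⟩ := keycons16 χ (x•f + g) (f + t•g)
    (by rw [e1]; exact hqpos)
    (by rw [ec2, ec]; ring)
    (by rw [ec]
        have : a1 * q ≠ 0 := mul_ne_zero ha1ne (ne_of_gt hqpos)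
        exact div_ne_zero (neg_ne_zero.mpr this) hD2ne)
    (by rw [e1, ec, eww]
        have hD2sq : (0:F) < D2^2 := by positivity
        have hqq : (0:F) < q^2 := by positivity
        have eL : q * (-(D1 * q / D2)) = D1 * q^2 * (-D2) / D2^2 := by
          field_simp
        have eR : (-(a1 * q) / D2)^2 = a1^2 * q^2 / D2^2 := by
          field_simp
        rw [eL, eR, div_lt_div_iff₀ hD2sq hD2sq]
        nlinarith [mul_lt_mul_of_pos_right hB2a (mul_pos hqq hD2sq)])
  exact ⟨x•f + g, v₂, by rw [e1]; exact hqpos, ha, hb⟩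

private lemma caseB2_16 (hsd : ∀ a b : F, 0 < a → a < b → ∃ c : F, a < c ^ 2 ∧ c ^ 2 < b)
    (χ : W →ₗ[F] W →ₗ[F] F) (b : Module.Basis (Fin 3) F W) (i j k : Fin 3)
    (hcov : ∀ p : Fin 3, p = i ∨ p = j ∨ p = k)
    (hij : i ≠ j) (hik : i ≠ k) (hjk : j ≠ k)
    (horth : ∀ p q : Fin 3, p ≠ q → χ (b p) (b q) + χ (b q) (b p) = 0)
    (hnd : ∀ u : W, (∀ v : W, χ u v = 0) → u = 0)
    (hns : ∃ u v : W, χ u v ≠ χ v u)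
    (hDi : 0 < χ (b i) (b i)) (hDj : χ (b j) (b j) < 0) (hDk : χ (b k) (b k) ≤ 0) :
    ∃ v₁ v₂ : W, 0 < χ v₁ v₁ ∧ 0 < χ v₂ v₂ ∧ χ v₁ v₂ = 0 := by
  have hgf : χ (b j) (b i) = - χ (b i) (b j) := by linarith [horth i j hij]
  have hhf : χ (b k) (b i) = - χ (b i) (b k) := by linarith [horth i k hik]
  have hhg : χ (b k) (b j) = - χ (b j) (b k) := by linarith [horth j k hjk]
  by_cases hB2a : χ (b i) (b i) * (-(χ (b j) (b j))) < (χ (b i) (b j))^2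
  · exact planeB2_16 hsd χ (b i) (b j) hDi hDj hgf hB2a
  · rcases lt_or_eq_of_le hDk with hk | hk
    · -- χ (b k) (b k) < 0
      by_cases ha2 : χ (b i) (b k) = 0
      · by_cases ha3 : χ (b j) (b k) = 0
        · -- B2c : only a1 possibly nonzero
          have ha1 : χ (b i) (b j) ≠ 0 := by
            intro h1
            obtain ⟨u, v, huv⟩ := hns
            exact huv (symmall16 χ b i j k hcov horth hij hik hjk h1 ha2 ha3 u v)
          obtain ⟨x, hx0, hq, hqε⟩ := getx16 hsd (χ (b i) (b i)) (χ (b k) (b k))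
            ((χ (b i) (b j))^2 * (-(χ (b k) (b k))) / (χ (b i) (b i) * (-(χ (b j) (b j)))))
            hDi hk
            (by apply div_pos
                · apply mul_pos (by positivity) (by linarith)
                · exact mul_pos hDi (by linarith))
          apply mixed16 χ (b i) (b k) (b j) x hhf hgf
            (by rw [hhg, ha3]; simp)
            hq
            (by rw [hhg, ha3]
                have hpos1 : (0:F) < χ (b i) (b i) * (-(χ (b j) (b j))) :=
                  mul_pos hDi (by linarith)
                have h1 : (x^2 * χ (b i) (b i) + χ (b k) (b k)) * (χ (b i) (b i) * (-(χ (b j) (b j))))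
                    < (χ (b i) (b j))^2 * (-(χ (b k) (b k))) := by
                  rw [← lt_div_iff₀ hpos1]; exact hqε
                have h2 : (χ (b i) (b j))^2 * (-(χ (b k) (b k)))
                    ≤ (χ (b i) (b j))^2 * (x^2 * χ (b i) (b i)) := by
                  apply mul_le_mul_of_nonneg_left (by nlinarith) (sq_nonneg _)
                nlinarith [hq, hDi])
            (by rw [hhg, ha3]
                simpa using mul_ne_zero hx0 ha1)
        · -- a2 = 0, a3 ≠ 0
          obtain ⟨x, hx0, hq, hqε⟩ := getx16 hsd (χ (b i) (b i)) (χ (b j) (b j))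
            ((χ (b j) (b k))^2 / (-(χ (b k) (b k)))) hDi hDj
            (div_pos (by positivity) (by linarith))
          apply mixed16 χ (b i) (b j) (b k) x hgf hhf hhg hq
            (by rw [ha2]
                have h1 : (x^2 * χ (b i) (b i) + χ (b j) (b j)) * (-(χ (b k) (b k)))
                    < (χ (b j) (b k))^2 := by
                  rw [← lt_div_iff₀ (by linarith : (0:F) < -(χ (b k) (b k)))]; exact hqε
                nlinarith [h1])
            (by rw [ha2]; simpa using ha3)
      · -- a2 ≠ 0
        obtain ⟨x, hx0, hq, hqε⟩ := getx16 hsd (χ (b i) (b i)) (χ (b j) (b j))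
          ((χ (b i) (b k))^2 * (-(χ (b j) (b j))) / (χ (b i) (b i) * (-(χ (b k) (b k)))))
          hDi hDj
          (by apply div_pos
              · apply mul_pos (by positivity) (by linarith)
              · exact mul_pos hDi (by linarith))
        set x' : F := if 0 ≤ x * χ (b i) (b k) * χ (b j) (b k) then x else -x with hx'd
        have hx'2 : x'^2 = x^2 := by rw [hx'd]; split_ifs <;> ring
        have hx'sign : 0 ≤ x' * χ (b i) (b k) * χ (b j) (b k) := by
          rw [hx'd]; split_ifs with hss
          · exact hss
          · push_neg at hss; nlinarith
        have hx'0 : x' ≠ 0 := by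
          rw [hx'd]; split_ifs
          · exact hx0
          · exact neg_ne_zero.mpr hx0
        have hq' : 0 < x'^2 * χ (b i) (b i) + χ (b j) (b j) := by rw [hx'2]; exact hq
        have hCexp : (x' * χ (b i) (b k) + χ (b j) (b k))^2
            = x^2 * (χ (b i) (b k))^2 + 2*(x' * χ (b i) (b k) * χ (b j) (b k)) + (χ (b j) (b k))^2 := by
          rw [← hx'2]; ring
        have hC : x^2 * (χ (b i) (b k))^2 ≤ (x' * χ (b i) (b k) + χ (b j) (b k))^2 := by
          rw [hCexp]; nlinarith [sq_nonneg (χ (b j) (b k))]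
        have hpos2 : (0:F) < χ (b i) (b i) * (-(χ (b k) (b k))) := mul_pos hDi (by linarith)
        have h1 : (x^2 * χ (b i) (b i) + χ (b j) (b j)) * (χ (b i) (b i) * (-(χ (b k) (b k))))
            < (χ (b i) (b k))^2 * (-(χ (b j) (b j))) := by
          rw [← lt_div_iff₀ hpos2]; exact hqε
        have h2 : (χ (b i) (b k))^2 * (-(χ (b j) (b j)))
            ≤ (χ (b i) (b k))^2 * (x^2 * χ (b i) (b i)) := by
          apply mul_le_mul_of_nonneg_left (by nlinarith) (sq_nonneg _)
        have h4 : (x'^2 * χ (b i) (b i) + χ (b j) (b j)) * (-(χ (b k) (b k)))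
            < (x' * χ (b i) (b k) + χ (b j) (b k))^2 := by
          rw [hx'2]
          nlinarith [h1, h2, hC, hDi, hq]
        have hcne : x' * χ (b i) (b k) + χ (b j) (b k) ≠ 0 := by
          intro h0
          rw [h0] at h4
          have : 0 < (x'^2 * χ (b i) (b i) + χ (b j) (b j)) * (-(χ (b k) (b k))) :=
            mul_pos hq' (by linarith)
          norm_num at h4
          linarith
        exact mixed16 χ (b i) (b j) (b k) x' hgf hhf hhg hq' h4 hcne
    · -- χ (b k) (b k) = 0
      by_cases ha23 : χ (b i) (b k) = 0 ∧ χ (b j) (b k) = 0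
      · exfalso
        have hz : χ (b k) = 0 := by
          apply b.ext
          intro p
          rcases hcov p with rfl | rfl | rfl
          · simp [hhf, ha23.1]
          · simp [hhg, ha23.2]
          · simp [hk]
        have hk0 : b k = 0 := hnd (b k) (fun v => by rw [hz]; simp)
        exact b.ne_zero k hk0
      · obtain ⟨x, hx0, hq, _⟩ := getx16 hsd (χ (b i) (b i)) (χ (b j) (b j)) 1 hDi hDj one_pos
        by_cases hxc : x * χ (b i) (b k) + χ (b j) (b k) = 0
        · have hc' : -x * χ (b i) (b k) + χ (b j) (b k) ≠ 0 := by
            intro h'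
            apply ha23
            constructor
            · have hx2 : x * χ (b i) (b k) = 0 := by linarith
              exact (mul_eq_zero.mp hx2).resolve_left hx0
            · linarith
          have hqneg : 0 < (-x)^2 * χ (b i) (b i) + χ (b j) (b j) := by
            have : (-x)^2 = x^2 := by ring
            rw [this]; exact hq
          apply mixed16 χ (b i) (b j) (b k) (-x) hgf hhf hhg hqneg
            (by rw [hk]
                have hcpos : 0 < (-x * χ (b i) (b k) + χ (b j) (b k))^2 :=
                  lt_of_le_of_ne (sq_nonneg _) (Ne.symm (pow_ne_zero 2 hc'))
                simpa using hcpos)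
            hc'
        · apply mixed16 χ (b i) (b j) (b k) x hgf hhf hhg hq
            (by rw [hk]
                have hcpos : 0 < (x * χ (b i) (b k) + χ (b j) (b k))^2 :=
                  lt_of_le_of_ne (sq_nonneg _) (Ne.symm (pow_ne_zero 2 hxc))
                simpa using hcpos)
            hxc

private lemma aux16 (hsd : ∀ a b : F, 0 < a → a < b → ∃ c : F, a < c ^ 2 ∧ c ^ 2 < b)
    (χ : W →ₗ[F] W →ₗ[F] F) (b : Module.Basis (Fin 3) F W) (i j k : Fin 3)
    (hcov : ∀ p : Fin 3, p = i ∨ p = j ∨ p = k)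
    (hij : i ≠ j) (hik : i ≠ k) (hjk : j ≠ k)
    (horth : ∀ p q : Fin 3, p ≠ q → χ (b p) (b q) + χ (b q) (b p) = 0)
    (hnd : ∀ u : W, (∀ v : W, χ u v = 0) → u = 0)
    (hns : ∃ u v : W, χ u v ≠ χ v u)
    (hDi : 0 < χ (b i) (b i)) (hDj : χ (b j) (b j) ≤ 0) (hDk : χ (b k) (b k) ≤ 0) :
    ∃ v₁ v₂ : W, 0 < χ v₁ v₁ ∧ 0 < χ v₂ v₂ ∧ χ v₁ v₂ = 0 := by
  rcases lt_or_eq_of_le hDj with hj | hj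
  · exact caseB2_16 hsd χ b i j k hcov hij hik hjk horth hnd hns hDi hj hDk
  · rcases lt_or_eq_of_le hDk with hk | hk
    · have hcov' : ∀ p : Fin 3, p = i ∨ p = k ∨ p = j := fun p => by
        rcases hcov p with h | h | h <;> tauto
      exact caseB2_16 hsd χ b i k j hcov' hik hij (Ne.symm hjk) horth hnd hns hDi hk
        (le_of_eq hj)
    · -- B1 : both zero
      have hgf : χ (b j) (b i) = - χ (b i) (b j) := by linarith [horth i j hij]
      have hhf : χ (b k) (b i) = - χ (b i) (b k) := by linarith [horth i k hik]
      have hhg : χ (b k) (b j) = - χ (b j) (b k) := by linarith [horth j k hjk]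
      by_cases ha1 : χ (b i) (b j) = 0
      · by_cases ha2 : χ (b i) (b k) = 0
        · have ha3 : χ (b j) (b k) ≠ 0 := by
            intro h3
            obtain ⟨u, v, huv⟩ := hns
            exact huv (symmall16 χ b i j k hcov horth hij hik hjk ha1 ha2 h3 u v)
          apply mixed16 χ (b i) (b j) (b k) 1 hgf hhf hhg
            (by rw [hj]; simpa using hDi)
            (by rw [hk, ha2]
                have : 0 < (χ (b j) (b k))^2 :=
                  lt_of_le_of_ne (sq_nonneg _) (Ne.symm (pow_ne_zero 2 ha3))
                simpa using this)
            (by rw [ha2]; simpa using ha3)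
        · apply simple16 χ (b i) (b k) hDi hhf
            (by rw [hk]
                have : 0 < (χ (b i) (b k))^2 :=
                  lt_of_le_of_ne (sq_nonneg _) (Ne.symm (pow_ne_zero 2 ha2))
                simpa using this)
            ha2
      · apply simple16 χ (b i) (b j) hDi hgf
          (by rw [hj]
              have : 0 < (χ (b i) (b j))^2 :=
                lt_of_le_of_ne (sq_nonneg _) (Ne.symm (pow_ne_zero 2 ha1))
              simpa using this)
          ha1

end Aux16

/-- In dimension 3 over a square-dense ordered field, a non-degenerate non-symmetric
bilinear form taking a positive value on the diagonal admits two positive vectors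
`v₁, v₂` with `χ(v₁, v₂) = 0`. -/
theorem stmt16 {F W : Type*} [Field F] [LinearOrder F] [IsStrictOrderedRing F] [AddCommGroup W] [Module F W]
    (hsd : ∀ a b : F, 0 < a → a < b → ∃ c : F, a < c ^ 2 ∧ c ^ 2 < b)
    (hdim : Module.finrank F W = 3)
    (χ : W →ₗ[F] W →ₗ[F] F)
    (hnd : ∀ u : W, (∀ v : W, χ u v = 0) → u = 0)
    (hnsymm : ∃ u v : W, χ u v ≠ χ v u)
    (hpos : ∃ u : W, 0 < χ u u) :
    ∃ v₁ v₂ : W, 0 < χ v₁ v₁ ∧ 0 < χ v₂ v₂ ∧ χ v₁ v₂ = 0 := by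
  haveI : FiniteDimensional F W :=
    Module.finite_of_finrank_pos (by rw [hdim]; norm_num)
  haveI : Invertible (2 : F) := invertibleOfNonzero two_ne_zero
  have hSsymm : (χ + χ.flip).IsSymm := by
    rw [LinearMap.isSymm_def]
    intro x y
    simp only [LinearMap.add_apply, LinearMap.flip_apply, RingHom.id_apply]
    ring
  obtain ⟨b0, hb0⟩ := LinearMap.BilinForm.exists_orthogonal_basis hSsymm
  let b : Module.Basis (Fin 3) F W := b0.reindex (finCongr hdim)
  have horth : ∀ p q : Fin 3, p ≠ q → χ (b p) (b q) + χ (b q) (b p) = 0 := by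
    intro p q hpq
    have hne : (finCongr hdim).symm p ≠ (finCongr hdim).symm q := by
      intro h
      exact hpq (by simpa using congrArg (finCongr hdim) h)
    have := hb0 hne
    simpa [b, Module.Basis.reindex_apply, LinearMap.BilinForm.IsOrtho, LinearMap.add_apply,
      LinearMap.flip_apply, Function.onFun] using this
  obtain ⟨u, hu⟩ := hpos
  have hex : ∃ p : Fin 3, 0 < χ (b p) (b p) := by
    by_contra hno
    push_neg at hno
    have hu' : u = b.repr u 0 • b 0 + b.repr u 1 • b 1 + b.repr u 2 • b 2 := by
      have h := b.sum_repr u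
      rw [Fin.sum_univ_three] at h
      exact h.symm
    have hkey : χ (b.repr u 0 • b 0 + b.repr u 1 • b 1 + b.repr u 2 • b 2)
        (b.repr u 0 • b 0 + b.repr u 1 • b 1 + b.repr u 2 • b 2)
        = (b.repr u 0)^2 * χ (b 0) (b 0) + (b.repr u 1)^2 * χ (b 1) (b 1)
          + (b.repr u 2)^2 * χ (b 2) (b 2) := by
      simp only [map_add, map_smul, LinearMap.add_apply, LinearMap.smul_apply, smul_eq_mul]
      linear_combination (b.repr u 0 * b.repr u 1) * horth 0 1 (by decide)
        + (b.repr u 0 * b.repr u 2) * horth 0 2 (by decide)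
        + (b.repr u 1 * b.repr u 2) * horth 1 2 (by decide)
    rw [← hu'] at hkey
    nlinarith [hkey, hu, hno 0, hno 1, hno 2, sq_nonneg (b.repr u 0), sq_nonneg (b.repr u 1),
      sq_nonneg (b.repr u 2)]
  obtain ⟨i, hi⟩ := hex
  by_cases hA : ∃ p, p ≠ i ∧ 0 < χ (b p) (b p)
  · obtain ⟨p, hpi, hp⟩ := hA
    by_cases h0 : χ (b i) (b p) = 0
    · exact ⟨b i, b p, hi, hp, h0⟩
    · apply simple16 χ (b i) (b p) hi (by linarith [horth i p (Ne.symm hpi)])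
        (by have : 0 < (χ (b i) (b p))^2 :=
              lt_of_le_of_ne (sq_nonneg _) (Ne.symm (pow_ne_zero 2 h0))
            nlinarith [mul_pos hi hp])
        h0
  · push_neg at hA
    fin_cases i
    · exact aux16 hsd χ b 0 1 2 (by decide) (by decide) (by decide) (by decide) horth hnd hnsymm
        hi (hA 1 (by decide)) (hA 2 (by decide))
    · exact aux16 hsd χ b 1 0 2 (by decide) (by decide) (by decide) (by decide) horth hnd hnsymm
        hi (hA 0 (by decide)) (hA 2 (by decide))
    · exact aux16 hsd χ b 2 0 1 (by decide) (by decide) (by decide) (by decide) horth hnd hnsymm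
        hi (hA 0 (by decide)) (hA 1 (by decide))
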